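/- Let T₀, T₁, T₂, T₃ : ℝ → Matrix(k,k,ℂ) be differentiable functions such that T_j(z) is skew-Hermitian (T_j(z)ᴴ = −T_j(z)) for every z and j. Set σ = T₀ + i·T₁ and τ = T₂ + i·T₃, and write σ* and τ* for their pointwise conjugate transposes. Then the gauged Nahm equations T₁' − [T₀,T₁] = [T₂,T₃], T₂' − [T₀,T₂] = [T₃,T₁], T₃' − [T₀,T₃] = [T₁,T₂] hold at a point z if and only if both τ'(z) = [σ(z), τ(z)] and (σ + σ*)'(z) = [σ(z), σ*(z)] + [τ(z), τ*(z)] hold at z. -/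

import Mathlib

open Matrix

attribute [local instance] Matrix.normedAddCommGroup Matrix.normedSpace

/-- Donaldson's complex variable `σ = T₀ + i T₁` (or `τ = T₂ + i T₃`). -/
noncomputable def cplxVar (k : ℕ) (S T : ℝ → Matrix (Fin k) (Fin k) ℂ)
    (z : ℝ) : Matrix (Fin k) (Fin k) ℂ :=
  S z + Complex.I • T z

section Aux

variable {k : ℕ}

/-- conjugate transpose as a continuous ℝ-linear map. -/
noncomputable def ctL (k : ℕ) :
    Matrix (Fin k) (Fin k) ℂ →L[ℝ] Matrix (Fin k) (Fin k) ℂ :=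
  LinearMap.toContinuousLinearMap
    { toFun := fun X => Xᴴ
      map_add' := fun X Y => conjTranspose_add X Y
      map_smul' := fun r X => by
        ext i j
        simp [conjTranspose_apply, Matrix.smul_apply] }

lemma deriv_ct (T : ℝ → Matrix (Fin k) (Fin k) ℂ) (hT : Differentiable ℝ T) (z : ℝ) :
    deriv (fun w => (T w)ᴴ) z = (deriv T z)ᴴ := by
  have h := ((ctL k).hasFDerivAt.comp_hasDerivAt z (hT z).hasDerivAt).deriv
  exact h

lemma deriv_skew (T : ℝ → Matrix (Fin k) (Fin k) ℂ) (hT : Differentiable ℝ T)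
    (hs : ∀ w, (T w)ᴴ = -(T w)) (z : ℝ) :
    (deriv T z)ᴴ = -(deriv T z) := by
  have h1 : (fun w => (T w)ᴴ) = fun w => -(T w) := funext hs
  have h2 := deriv_ct T hT z
  rw [h1] at h2
  rw [← h2]; exact deriv.fun_neg

lemma decomp {A B C D : Matrix (Fin k) (Fin k) ℂ}
    (hA : Aᴴ = -A) (hB : Bᴴ = -B) (hC : Cᴴ = -C) (hD : Dᴴ = -D) :
    A + Complex.I • B = C + Complex.I • D ↔ A = C ∧ B = D := by
  constructor
  · intro h
    have h2 : -A + Complex.I • B = -C + Complex.I • D := by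
      have := congrArg conjTranspose h
      simpa [conjTranspose_add, conjTranspose_smul, Complex.star_def, Complex.conj_I,
        hA, hB, hC, hD, neg_smul, smul_neg] using this
    constructor
    · have e : (2:ℂ) • A = (2:ℂ) • C := by
        have e1 : (A + Complex.I • B) - (-A + Complex.I • B)
            = (C + Complex.I • D) - (-C + Complex.I • D) := by rw [h, h2]
        have e2 : (A + Complex.I • B) - (-A + Complex.I • B) = (2:ℂ) • A := by
          rw [two_smul]; abel
        have e3 : (C + Complex.I • D) - (-C + Complex.I • D) = (2:ℂ) • C := by
          rw [two_smul]; abel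
        rw [e2, e3] at e1; exact e1
      exact smul_right_injective _ (two_ne_zero) e
    · have e : ((2:ℂ) * Complex.I) • B = ((2:ℂ) * Complex.I) • D := by
        have e1 : (A + Complex.I • B) + (-A + Complex.I • B)
            = (C + Complex.I • D) + (-C + Complex.I • D) := by rw [h, h2]
        have e2 : (A + Complex.I • B) + (-A + Complex.I • B)
            = ((2:ℂ) * Complex.I) • B := by
          rw [mul_smul, two_smul]; abel
        have e3 : (C + Complex.I • D) + (-C + Complex.I • D)
            = ((2:ℂ) * Complex.I) • D := by
          rw [mul_smul, two_smul]; abel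
        rw [e2, e3] at e1; exact e1
      refine smul_right_injective _ ?_ e
      simp [Complex.I_ne_zero]
  · rintro ⟨rfl, rfl⟩; rfl

end Aux

theorem stmt13 (k : ℕ) (hk : 1 ≤ k) (T0 T1 T2 T3 : ℝ → Matrix (Fin k) (Fin k) ℂ)
    (hd0 : Differentiable ℝ T0) (hd1 : Differentiable ℝ T1)
    (hd2 : Differentiable ℝ T2) (hd3 : Differentiable ℝ T3)
    (hs0 : ∀ z, (T0 z)ᴴ = -(T0 z)) (hs1 : ∀ z, (T1 z)ᴴ = -(T1 z))
    (hs2 : ∀ z, (T2 z)ᴴ = -(T2 z)) (hs3 : ∀ z, (T3 z)ᴴ = -(T3 z))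
    (z : ℝ) :
    (deriv T1 z - (T0 z * T1 z - T1 z * T0 z) = T2 z * T3 z - T3 z * T2 z ∧
      deriv T2 z - (T0 z * T2 z - T2 z * T0 z) = T3 z * T1 z - T1 z * T3 z ∧
      deriv T3 z - (T0 z * T3 z - T3 z * T0 z) = T1 z * T2 z - T2 z * T1 z) ↔
    (deriv (cplxVar k T2 T3) z =
        cplxVar k T0 T1 z * cplxVar k T2 T3 z - cplxVar k T2 T3 z * cplxVar k T0 T1 z ∧
      deriv (fun w => cplxVar k T0 T1 w + (cplxVar k T0 T1 w)ᴴ) z =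
        (cplxVar k T0 T1 z * (cplxVar k T0 T1 z)ᴴ - (cplxVar k T0 T1 z)ᴴ * cplxVar k T0 T1 z) +
          (cplxVar k T2 T3 z * (cplxVar k T2 T3 z)ᴴ -
            (cplxVar k T2 T3 z)ᴴ * cplxVar k T2 T3 z)) := by
  set M0 := T0 z with hM0
  set M1 := T1 z with hM1
  set M2 := T2 z with hM2
  set M3 := T3 z with hM3
  -- derivative of τ
  have hτd : deriv (cplxVar k T2 T3) z = deriv T2 z + Complex.I • deriv T3 z := by
    have h2 := (hd2 z).hasDerivAt
    have h3 := ((hd3 z).hasDerivAt).const_smul Complex.I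
    exact (h2.add h3).deriv
  -- σ + σᴴ = 2i T1
  have hσH : ∀ w, (cplxVar k T0 T1 w)ᴴ = -(T0 w) + Complex.I • T1 w := by
    intro w
    rw [cplxVar, conjTranspose_add, conjTranspose_smul, hs0, hs1, Complex.star_def,
      Complex.conj_I, neg_smul, smul_neg, neg_neg]
  have hfun : (fun w => cplxVar k T0 T1 w + (cplxVar k T0 T1 w)ᴴ)
      = fun w => ((2:ℂ) * Complex.I) • T1 w := by
    funext w
    rw [hσH w, cplxVar, mul_smul, two_smul]
    abel
  have hσd : deriv (fun w => cplxVar k T0 T1 w + (cplxVar k T0 T1 w)ᴴ) z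
      = ((2:ℂ) * Complex.I) • deriv T1 z := by
    rw [hfun]
    exact (((hd1 z).hasDerivAt).const_smul ((2:ℂ) * Complex.I)).deriv
  -- algebraic expansions
  have key1 : cplxVar k T0 T1 z * cplxVar k T2 T3 z - cplxVar k T2 T3 z * cplxVar k T0 T1 z
      = ((M0 * M2 - M2 * M0) - (M1 * M3 - M3 * M1))
        + Complex.I • ((M0 * M3 - M3 * M0) + (M1 * M2 - M2 * M1)) := by
    rw [cplxVar, cplxVar, ← hM0, ← hM1, ← hM2, ← hM3]
    simp only [add_mul, mul_add, smul_mul_assoc, mul_smul_comm, smul_smul,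
      Complex.I_mul_I, neg_smul, one_smul, smul_add, smul_sub]
    abel
  have key2 : (cplxVar k T0 T1 z * (cplxVar k T0 T1 z)ᴴ - (cplxVar k T0 T1 z)ᴴ * cplxVar k T0 T1 z)
        + (cplxVar k T2 T3 z * (cplxVar k T2 T3 z)ᴴ - (cplxVar k T2 T3 z)ᴴ * cplxVar k T2 T3 z)
      = ((2:ℂ) * Complex.I) • ((M0 * M1 - M1 * M0) + (M2 * M3 - M3 * M2)) := by
    have hτH : (cplxVar k T2 T3 z)ᴴ = -(T2 z) + Complex.I • T3 z := by
      rw [cplxVar, conjTranspose_add, conjTranspose_smul, hs2, hs3, Complex.star_def,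
        Complex.conj_I, neg_smul, smul_neg, neg_neg]
    rw [hσH z, hτH, cplxVar, cplxVar, ← hM0, ← hM1, ← hM2, ← hM3]
    simp only [add_mul, mul_add, neg_mul, mul_neg, smul_mul_assoc, mul_smul_comm, smul_smul,
      Complex.I_mul_I, neg_smul, one_smul]
    rw [mul_smul, two_smul]
    simp only [smul_add, smul_sub, smul_neg, smul_smul, Complex.I_mul_I, neg_smul, one_smul]
    abel
  -- skewness of derivatives and commutators
  have hA2 := deriv_skew T2 hd2 hs2 z
  have hA3 := deriv_skew T3 hd3 hs3 z
  have hcomm : ∀ X Y : Matrix (Fin k) (Fin k) ℂ, Xᴴ = -X → Yᴴ = -Y →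
      (X * Y - Y * X)ᴴ = -(X * Y - Y * X) := by
    intro X Y hX hY
    rw [conjTranspose_sub, conjTranspose_mul, conjTranspose_mul, hX, hY]
    simp [mul_neg, neg_mul]
  have hC : (((M0 * M2 - M2 * M0) - (M1 * M3 - M3 * M1)))ᴴ
      = -((M0 * M2 - M2 * M0) - (M1 * M3 - M3 * M1)) := by
    rw [conjTranspose_sub, hcomm _ _ (hs0 z) (hs2 z), hcomm _ _ (hs1 z) (hs3 z)]
    abel
  have hD : (((M0 * M3 - M3 * M0) + (M1 * M2 - M2 * M1)))ᴴ
      = -((M0 * M3 - M3 * M0) + (M1 * M2 - M2 * M1)) := by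
    rw [conjTranspose_add, hcomm _ _ (hs0 z) (hs3 z), hcomm _ _ (hs1 z) (hs2 z)]
    abel
  rw [hτd, hσd, key1, key2, decomp hA2 hA3 hC hD]
  have h2I : ((2:ℂ) * Complex.I) ≠ 0 := by simp [Complex.I_ne_zero]
  constructor
  · rintro ⟨h1, h2, h3⟩
    refine ⟨⟨?_, ?_⟩, ?_⟩
    · rw [sub_eq_iff_eq_add] at h2
      rw [h2]; abel
    · rw [sub_eq_iff_eq_add] at h3
      rw [h3]; abel
    · rw [sub_eq_iff_eq_add] at h1
      rw [h1]; congr 1; abel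
  · rintro ⟨⟨h2, h3⟩, h1⟩
    have h1' := smul_right_injective (Matrix (Fin k) (Fin k) ℂ) h2I h1
    refine ⟨?_, ?_, ?_⟩
    · rw [h1']
      abel
    · rw [h2]; abel
    · rw [h3]; abel
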